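/- arXiv:2502.12902 — 2 statements merged into one kernel-verified Lean document; each statement's English description precedes it below -/
import Mathlib

section
/- Let H be a separable Hilbert space and let P, Q be Borel probability measures on H with finite first moments. Then E‖X−Y‖ − (1/2)E‖X−X'‖ − (1/2)E‖Y−Y'‖ ≥ 0, where X,X' i.i.d. ∼ P, Y,Y' i.i.d. ∼ Q, with X independent of Y. -/
open MeasureTheory ENNReal Set Filter Topology

namespace EnergyAux

/-- truncated-subtraction inequality in `ℝ≥0∞`. -/
lemma ennreal_key {a b : ℝ≥0∞} (hab : a ≤ b) (hb : b ≤ 1) :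
    a * (1 - a) + b * (1 - b) ≤ a * (1 - b) + b * (1 - a) := by
  have h1 : (1 : ℝ≥0∞) - a = (1 - b) + (b - a) := (tsub_add_tsub_cancel hb hab).symm
  rw [h1, mul_add, mul_add]
  calc a * (1 - b) + a * (b - a) + b * (1 - b)
      ≤ a * (1 - b) + b * (b - a) + b * (1 - b) := by
        gcongr
    _ = a * (1 - b) + (b * (1 - b) + b * (b - a)) := by ring
  -- done

lemma ennreal_key' (a b : ℝ≥0∞) (ha : a ≤ 1) (hb : b ≤ 1) :
    a * (1 - a) + b * (1 - b) ≤ a * (1 - b) + b * (1 - a) := by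
  rcases le_total a b with h | h
  · exact ennreal_key h hb
  · have := ennreal_key h ha
    calc a * (1 - a) + b * (1 - b) = b * (1 - b) + a * (1 - a) := by ring
      _ ≤ b * (1 - a) + a * (1 - b) := this
      _ = a * (1 - b) + b * (1 - a) := by ring

noncomputable def k (t x : ℝ) : ℝ≥0∞ := if t < x then 1 else 0

lemma k_eq_indicator (t : ℝ) : (fun x => k t x) = (Ioi t).indicator 1 := by
  funext x
  simp only [k, indicator, mem_Ioi, Pi.one_apply]

lemma one_sub_k_eq_indicator (t : ℝ) : (fun x => 1 - k t x) = (Iic t).indicator 1 := by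
  funext x
  by_cases h : t < x
  · simp [k, h, indicator, mem_Iic, not_le.mpr h]
  · simp [k, h, indicator, mem_Iic, not_lt.mp h]

lemma ofReal_abs_eq_lintegral (x y : ℝ) :
    ENNReal.ofReal |x - y| = ∫⁻ t, (k t x * (1 - k t y) + k t y * (1 - k t x)) := by
  have h : (fun t => k t x * (1 - k t y) + k t y * (1 - k t x))
      = (Ico (min x y) (max x y)).indicator 1 := by
    funext t
    by_cases hx : t < x <;> by_cases hy : t < y <;>
      simp only [k, if_pos, if_neg, hx, hy, if_true, if_false, indicator, mem_Ico,
        Pi.one_apply]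
    · rw [if_neg]
      · simp
      · rintro ⟨h1, h2⟩
        exact absurd (lt_min hx hy) (not_lt.mpr h1)
    · rw [if_pos ⟨min_le_of_right_le (not_lt.mp hy), lt_max_of_lt_left hx⟩]
      simp
    · rw [if_pos ⟨min_le_of_left_le (not_lt.mp hx), lt_max_of_lt_right hy⟩]
      simp
    · rw [if_neg]
      · simp
      · rintro ⟨h1, h2⟩
        rcases max_cases x y with ⟨he, _⟩ | ⟨he, _⟩ <;> rw [he] at h2
        · exact hx h2
        · exact hy h2
  rw [h, lintegral_indicator_one measurableSet_Ico, Real.volume_Ico, ← max_sub_min_eq_abs]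
  rw [max_comm, min_comm]




lemma layer (p q : Measure ℝ) [IsProbabilityMeasure p] [IsProbabilityMeasure q] :
    ∫⁻ z : ℝ × ℝ, ENNReal.ofReal |z.1 - z.2| ∂(p.prod q)
      = ∫⁻ t, (p (Ioi t) * q (Iic t) + q (Ioi t) * p (Iic t)) := by
  have hmk : ∀ t, Measurable (k t) := fun t => by
    rw [show k t = (Ioi t).indicator 1 from k_eq_indicator t]
    exact measurable_one.indicator measurableSet_Ioi
  have hm1k : ∀ t, Measurable (fun x => 1 - k t x) := fun t => by
    rw [one_sub_k_eq_indicator t]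
    exact measurable_one.indicator measurableSet_Iic
  have ek : ∀ (μ : Measure ℝ) (t : ℝ), ∫⁻ x, k t x ∂μ = μ (Ioi t) := fun μ t => by
    rw [show (fun x => k t x) = (Ioi t).indicator 1 from k_eq_indicator t]
    exact lintegral_indicator_one measurableSet_Ioi
  have e1k : ∀ (μ : Measure ℝ) (t : ℝ), ∫⁻ x, (1 - k t x) ∂μ = μ (Iic t) := fun μ t => by
    rw [one_sub_k_eq_indicator t]
    exact lintegral_indicator_one measurableSet_Iic
  have h1 : ∫⁻ z : ℝ × ℝ, ENNReal.ofReal |z.1 - z.2| ∂(p.prod q)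
      = ∫⁻ z : ℝ × ℝ, (∫⁻ t, (k t z.1 * (1 - k t z.2) + k t z.2 * (1 - k t z.1))) ∂(p.prod q) :=
    lintegral_congr fun z => ofReal_abs_eq_lintegral z.1 z.2
  rw [h1]
  rw [lintegral_lintegral_swap ?meas]
  case meas =>
    apply Measurable.aemeasurable
    have hk1 : Measurable (fun zt : (ℝ × ℝ) × ℝ => k zt.2 zt.1.1) := by
      unfold k
      exact measurable_const.ite (measurableSet_lt measurable_snd measurable_fst.fst)
        measurable_const
    have hk2 : Measurable (fun zt : (ℝ × ℝ) × ℝ => k zt.2 zt.1.2) := by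
      unfold k
      exact measurable_const.ite (measurableSet_lt measurable_snd measurable_fst.snd)
        measurable_const
    exact (hk1.mul (measurable_const.sub hk2)).add (hk2.mul (measurable_const.sub hk1))
  refine lintegral_congr fun t => ?_
  rw [lintegral_add_left (show Measurable fun z : ℝ × ℝ => k t z.1 * (1 - k t z.2) from
    ((hmk t).comp measurable_fst).mul ((hm1k t).comp measurable_snd))]
  have h2 : ∫⁻ z : ℝ × ℝ, k t z.2 * (1 - k t z.1) ∂(p.prod q)
      = ∫⁻ z : ℝ × ℝ, (1 - k t z.1) * k t z.2 ∂(p.prod q) :=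
    lintegral_congr fun z => mul_comm _ _
  rw [h2, lintegral_prod_mul (hmk t).aemeasurable (hm1k t).aemeasurable,
    lintegral_prod_mul (hm1k t).aemeasurable (hmk t).aemeasurable, ek, e1k, ek, e1k]
  rw [mul_comm (p (Iic t)) (q (Ioi t))]

lemma oneDim (p q : Measure ℝ) [IsProbabilityMeasure p] [IsProbabilityMeasure q] :
    (∫⁻ z : ℝ × ℝ, ENNReal.ofReal |z.1 - z.2| ∂(p.prod p))
      + (∫⁻ z : ℝ × ℝ, ENNReal.ofReal |z.1 - z.2| ∂(q.prod q))
    ≤ 2 * ∫⁻ z : ℝ × ℝ, ENNReal.ofReal |z.1 - z.2| ∂(p.prod q) := by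
  rw [layer p p, layer q q, layer p q]
  have hIoi : ∀ (μ : Measure ℝ), Measurable fun t => μ (Ioi t) := fun μ =>
    Antitone.measurable (fun s t h => measure_mono (Ioi_subset_Ioi h))
  have hIic : ∀ (μ : Measure ℝ), Measurable fun t => μ (Iic t) := fun μ =>
    Monotone.measurable (fun s t h => measure_mono (Iic_subset_Iic.mpr h))
  rw [← lintegral_add_left (f := fun t => p (Ioi t) * p (Iic t) + p (Ioi t) * p (Iic t)) (((hIoi p).mul (hIic p)).add ((hIoi p).mul (hIic p)))]
  rw [← lintegral_const_mul' 2 _ (by norm_num : (2:ℝ≥0∞) ≠ ⊤)]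
  refine lintegral_mono fun t => ?_
  have hp : p (Iic t) = 1 - p (Ioi t) := by
    rw [← compl_Ioi, prob_compl_eq_one_sub measurableSet_Ioi]
  have hq : q (Iic t) = 1 - q (Ioi t) := by
    rw [← compl_Ioi, prob_compl_eq_one_sub measurableSet_Ioi]
  rw [hp, hq]
  set a := p (Ioi t)
  set b := q (Ioi t)
  have key := ennreal_key' a b prob_le_one prob_le_one
  calc a * (1 - a) + a * (1 - a) + (b * (1 - b) + b * (1 - b))
      = 2 * (a * (1 - a) + b * (1 - b)) := by ring
    _ ≤ 2 * (a * (1 - b) + b * (1 - a)) := mul_le_mul_right key 2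



section Euclid

variable {d : ℕ}
local notation "E" => EuclideanSpace ℝ (Fin d)
local notation "⟪" x ", " y "⟫" => @inner ℝ _ _ x y

noncomputable def ρ (w : EuclideanSpace ℝ (Fin d)) : ℝ≥0∞ :=
  ENNReal.ofReal (Real.exp (-‖w‖^2))

lemma ρ_cont : Continuous (ρ (d := d)) :=
  ENNReal.continuous_ofReal.comp (Real.continuous_exp.comp (continuous_norm.pow 2).neg)

lemma ρ_ne_top (w : EuclideanSpace ℝ (Fin d)) : ρ w ≠ ⊤ := ENNReal.ofReal_ne_top

lemma rot (u v : E) (hu : ‖u‖ = 1) (hv : ‖v‖ = 1) :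
    ∫⁻ w, ρ w * ENNReal.ofReal |⟪w, u⟫| = ∫⁻ w, ρ w * ENNReal.ofReal |⟪w, v⟫| := by
  set T : E ≃ₗᵢ[ℝ] E := (Submodule.span ℝ {u - v})ᗮ.reflection with hT
  have hTu : T u = v := Submodule.reflection_sub (hu.trans hv.symm)
  have hmp : MeasurePreserving T volume volume := T.measurePreserving
  have hF : Measurable fun w : E => ρ w * ENNReal.ofReal |⟪w, u⟫| := by
    refine (ρ_cont.measurable).mul ?_
    exact (ENNReal.continuous_ofReal.comp
      ((continuous_id.inner continuous_const).abs)).measurable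
  have := hmp.lintegral_comp hF
  calc ∫⁻ w, ρ w * ENNReal.ofReal |⟪w, u⟫|
      = ∫⁻ w, ρ (T w) * ENNReal.ofReal |⟪T w, u⟫| := this.symm
    _ = ∫⁻ w, ρ w * ENNReal.ofReal |⟪w, v⟫| := by
        refine lintegral_congr fun w => ?_
        have h1 : ρ (T w) = ρ w := by simp [ρ]
        have h2 : ⟪T w, u⟫ = ⟪w, v⟫ := by
          conv_lhs => rw [show u = T.symm v by rw [← hTu]; simp]
          rw [T.inner_map_eq_flip]
          have h3 : T.symm (T.symm v) = v := by
            rw [hT]; simp [Submodule.reflection_symm, Submodule.reflection_reflection]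
          rw [h3]
        rw [h1, h2]


lemma scale (u₀ : E) (hu₀ : ‖u₀‖ = 1) (z : E) :
    ∫⁻ w, ρ w * ENNReal.ofReal |⟪w, z⟫|
      = (∫⁻ w, ρ w * ENNReal.ofReal |⟪w, u₀⟫|) * ENNReal.ofReal ‖z‖ := by
  rcases eq_or_ne z 0 with hz | hz
  · simp [hz]
  · set u : E := ‖z‖⁻¹ • z with hu_def
    have hu : ‖u‖ = 1 := norm_smul_inv_norm hz
    have hzu : z = ‖z‖ • u := by
      rw [hu_def, smul_smul, mul_inv_cancel₀ (norm_ne_zero_iff.mpr hz), one_smul]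
    have h1 : ∀ w : E, ENNReal.ofReal |⟪w, z⟫| = ENNReal.ofReal ‖z‖ * ENNReal.ofReal |⟪w, u⟫| := by
      intro w
      rw [← ENNReal.ofReal_mul (norm_nonneg z)]
      congr 1
      conv_lhs => rw [hzu]
      rw [real_inner_smul_right, abs_mul, abs_of_nonneg (norm_nonneg z)]
    calc ∫⁻ w, ρ w * ENNReal.ofReal |⟪w, z⟫|
        = ∫⁻ w, ENNReal.ofReal ‖z‖ * (ρ w * ENNReal.ofReal |⟪w, u⟫|) := by
          refine lintegral_congr fun w => ?_
          rw [h1 w, mul_left_comm]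
      _ = ENNReal.ofReal ‖z‖ * ∫⁻ w, ρ w * ENNReal.ofReal |⟪w, u⟫| :=
          lintegral_const_mul' _ _ ENNReal.ofReal_ne_top
      _ = (∫⁻ w, ρ w * ENNReal.ofReal |⟪w, u₀⟫|) * ENNReal.ofReal ‖z‖ := by
          rw [rot u u₀ hu hu₀, mul_comm]

lemma c_pos (u₀ : E) (hu₀ : ‖u₀‖ = 1) :
    0 < ∫⁻ w, ρ w * ENNReal.ofReal |⟪w, u₀⟫| := by
  refine pos_iff_ne_zero.mpr (fun h0 => ?_)
  have hF : Measurable fun w : E => ρ w * ENNReal.ofReal |⟪w, u₀⟫| := by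
    refine ((ENNReal.continuous_ofReal.comp
      (Real.continuous_exp.comp (continuous_norm.pow 2).neg)).measurable).mul ?_
    exact (ENNReal.continuous_ofReal.comp
      ((continuous_id.inner continuous_const).abs)).measurable
  rw [lintegral_eq_zero_iff hF] at h0
  -- a.e. w, ρ w * ofReal |⟪w,u₀⟫| = 0, but ρ w ≠ 0, so ⟪w,u₀⟫ = 0 a.e.
  have hae : ∀ᵐ w : E ∂volume, ⟪w, u₀⟫ = 0 := by
    filter_upwards [h0] with w hw
    have hρ : ρ w ≠ 0 := by
      simp only [ρ, ne_eq, ENNReal.ofReal_eq_zero, not_le]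
      exact Real.exp_pos _
    rcases mul_eq_zero.mp hw with h | h
    · exact absurd h hρ
    · simpa [abs_eq_zero] using ENNReal.ofReal_eq_zero.mp h |> fun hle =>
        le_antisymm hle (abs_nonneg _)
  set S : Submodule ℝ (EuclideanSpace ℝ (Fin d)) := LinearMap.ker (innerSL ℝ u₀).toLinearMap with hS
  have hSne : S ≠ ⊤ := by
    intro htop
    have : ⟪u₀, u₀⟫ = 0 := by
      have := htop ▸ (Submodule.mem_top (x := u₀) (R := ℝ))
      simpa [hS, LinearMap.mem_ker] using this
    rw [real_inner_self_eq_norm_sq, hu₀] at this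
    norm_num at this
  have hSnull : volume (S : Set (EuclideanSpace ℝ (Fin d))) = 0 :=
    Measure.addHaar_submodule volume S hSne
  have hcompl : volume {w : EuclideanSpace ℝ (Fin d) | ⟪w, u₀⟫ ≠ 0} = 0 := by
    simpa [ae_iff] using hae
  have huniv : volume (univ : Set (EuclideanSpace ℝ (Fin d))) = 0 := by
    have hsub : (univ : Set (EuclideanSpace ℝ (Fin d)))
        ⊆ (S : Set (EuclideanSpace ℝ (Fin d))) ∪ {w | ⟪w, u₀⟫ ≠ 0} := by
      intro w _
      by_cases hw : ⟪w, u₀⟫ = 0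
      · left
        simp [hS, LinearMap.mem_ker, real_inner_comm, hw]
        rw [real_inner_comm] at hw
        exact hw
      · right; exact hw
    exact measure_mono_null hsub (measure_union_null hSnull hcompl)
  have : (0 : ℝ≥0∞) < volume (univ : Set (EuclideanSpace ℝ (Fin d))) :=
    isOpen_univ.measure_pos volume univ_nonempty
  rw [huniv] at this
  exact lt_irrefl _ this


lemma c_ne_top (u₀ : E) (hu₀ : ‖u₀‖ = 1) :
    (∫⁻ w, ρ w * ENNReal.ofReal |⟪w, u₀⟫|) ≠ ⊤ := by
  have hInt : Integrable (fun v : E => Real.exp (-(1/2) * ‖v‖^2)) volume := by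
    have hI := GaussianFourier.integrable_cexp_neg_mul_sq_norm_add
      (b := (1/2 : ℂ)) (by norm_num) 0 (0 : E)
    have := hI.norm
    refine this.congr (Eventually.of_forall fun v => ?_)
    simp only [Complex.norm_exp]
    congr 1
    simp [Complex.add_re, Complex.mul_re, ← Complex.ofReal_pow]
  have hbound : ∀ w : E, ρ w * ENNReal.ofReal |⟪w, u₀⟫|
      ≤ ENNReal.ofReal (Real.exp (-(1/2) * ‖w‖^2)) := by
    intro w
    rw [ρ, ← ENNReal.ofReal_mul (Real.exp_nonneg _)]
    refine ENNReal.ofReal_le_ofReal ?_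
    have h1 : |⟪w, u₀⟫| ≤ ‖w‖ := by
      have := abs_real_inner_le_norm w u₀
      rwa [hu₀, mul_one] at this
    have h2 : ‖w‖ ≤ Real.exp ((1/2) * ‖w‖^2) := by
      refine le_trans ?_ (Real.add_one_le_exp _)
      nlinarith [sq_nonneg (‖w‖ - 1)]
    calc Real.exp (-‖w‖^2) * |⟪w, u₀⟫| ≤ Real.exp (-‖w‖^2) * Real.exp ((1/2) * ‖w‖^2) := by
          refine mul_le_mul_of_nonneg_left (h1.trans h2) (Real.exp_nonneg _)
      _ = Real.exp (-(1/2) * ‖w‖^2) := by rw [← Real.exp_add]; ring_nf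
  refine ne_top_of_le_ne_top hInt.lintegral_lt_top.ne (lintegral_mono hbound)



lemma finDim (d : ℕ) (μ ν : Measure (EuclideanSpace ℝ (Fin d)))
    [IsProbabilityMeasure μ] [IsProbabilityMeasure ν] :
    (∫⁻ z, ENNReal.ofReal ‖z.1 - z.2‖ ∂(μ.prod μ))
      + (∫⁻ z, ENNReal.ofReal ‖z.1 - z.2‖ ∂(ν.prod ν))
    ≤ 2 * ∫⁻ z, ENNReal.ofReal ‖z.1 - z.2‖ ∂(μ.prod ν) := by
  rcases Nat.eq_zero_or_pos d with rfl | hd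
  · haveI : Unique (EuclideanSpace ℝ (Fin 0)) :=
      inferInstance
    have hzero : ∀ (α β : Measure (EuclideanSpace ℝ (Fin 0))) [IsProbabilityMeasure α]
        [IsProbabilityMeasure β],
        ∫⁻ z, ENNReal.ofReal ‖z.1 - z.2‖ ∂(α.prod β) = 0 := by
      intro α β _ _
      have : (fun z : EuclideanSpace ℝ (Fin 0) × EuclideanSpace ℝ (Fin 0) =>
          ENNReal.ofReal ‖z.1 - z.2‖) = fun _ => 0 := by
        funext z
        rw [Subsingleton.elim z.1 z.2, sub_self, norm_zero, ENNReal.ofReal_zero]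
      rw [this, lintegral_zero]
    rw [hzero μ μ, hzero ν ν, hzero μ ν]
    simp
  · haveI : BorelSpace (EuclideanSpace ℝ (Fin d) × EuclideanSpace ℝ (Fin d)) :=
      Prod.borelSpace
    haveI : BorelSpace (EuclideanSpace ℝ (Fin d) ×
        (EuclideanSpace ℝ (Fin d) × EuclideanSpace ℝ (Fin d))) := Prod.borelSpace
    set u₀ : EuclideanSpace ℝ (Fin d) := EuclideanSpace.single (⟨0, hd⟩ : Fin d) (1:ℝ)
      with hu₀_def
    have hu₀ : ‖u₀‖ = 1 := by rw [hu₀_def, EuclideanSpace.norm_single]; norm_num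
    set c : ℝ≥0∞ := ∫⁻ w, ρ w * ENNReal.ofReal |⟪w, u₀⟫| with hc_def
    have hc0 : c ≠ 0 := (c_pos u₀ hu₀).ne'
    have hctop : c ≠ ⊤ := c_ne_top u₀ hu₀
    -- the key identity
    have key : ∀ (α β : Measure (EuclideanSpace ℝ (Fin d))), IsProbabilityMeasure α →
        IsProbabilityMeasure β →
        c * (∫⁻ z, ENNReal.ofReal ‖z.1 - z.2‖ ∂(α.prod β))
          = ∫⁻ w, ρ w * (∫⁻ z, ENNReal.ofReal |⟪w, z.1⟫ - ⟪w, z.2⟫| ∂(α.prod β)) ∂volume := by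
      intro α β hα hβ
      have hswap : ∫⁻ w, (∫⁻ z, ρ w * ENNReal.ofReal |⟪w, z.1⟫ - ⟪w, z.2⟫| ∂(α.prod β)) ∂volume
          = ∫⁻ z, (∫⁻ w, ρ w * ENNReal.ofReal |⟪w, z.1⟫ - ⟪w, z.2⟫| ∂volume) ∂(α.prod β) := by
        refine lintegral_lintegral_swap ?_
        apply Measurable.aemeasurable
        refine Measurable.mul ((ρ_cont.comp continuous_fst).measurable) ?_
        refine (ENNReal.continuous_ofReal.comp (Continuous.abs
          ((continuous_fst.inner continuous_snd.fst).sub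
            (continuous_fst.inner continuous_snd.snd)))).measurable
      calc c * (∫⁻ z, ENNReal.ofReal ‖z.1 - z.2‖ ∂(α.prod β))
          = ∫⁻ z, c * ENNReal.ofReal ‖z.1 - z.2‖ ∂(α.prod β) :=
            (lintegral_const_mul' c _ hctop).symm
        _ = ∫⁻ z, (∫⁻ w, ρ w * ENNReal.ofReal |⟪w, z.1⟫ - ⟪w, z.2⟫| ∂volume) ∂(α.prod β) := by
            refine lintegral_congr fun z => ?_
            rw [hc_def, ← scale u₀ hu₀ (z.1 - z.2)]
            refine lintegral_congr fun w => ?_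
            rw [inner_sub_right]
        _ = ∫⁻ w, (∫⁻ z, ρ w * ENNReal.ofReal |⟪w, z.1⟫ - ⟪w, z.2⟫| ∂(α.prod β)) ∂volume :=
            hswap.symm
        _ = ∫⁻ w, ρ w * (∫⁻ z, ENNReal.ofReal |⟪w, z.1⟫ - ⟪w, z.2⟫| ∂(α.prod β)) ∂volume := by
            refine lintegral_congr fun w => ?_
            exact lintegral_const_mul' _ _ (ρ_ne_top w)
    -- the 1D bridge
    have bridge : ∀ (α β : Measure (EuclideanSpace ℝ (Fin d))), IsProbabilityMeasure α →
        IsProbabilityMeasure β → ∀ w : EuclideanSpace ℝ (Fin d),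
        ∫⁻ z, ENNReal.ofReal |⟪w, z.1⟫ - ⟪w, z.2⟫| ∂(α.prod β)
          = ∫⁻ s : ℝ × ℝ, ENNReal.ofReal |s.1 - s.2|
              ∂((α.map (fun x => ⟪w, x⟫)).prod (β.map (fun x => ⟪w, x⟫))) := by
      intro α β hα hβ w
      have hℓ : Measurable (fun x : EuclideanSpace ℝ (Fin d) => ⟪w, x⟫) :=
        (continuous_const.inner continuous_id).measurable
      rw [Measure.map_prod_map _ _ hℓ hℓ]
      rw [lintegral_map ?hf (hℓ.prodMap hℓ)]
      case hf =>
        exact (ENNReal.continuous_ofReal.comp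
          ((continuous_fst.sub continuous_snd).abs)).measurable
      rfl
    -- measurability of the inner integrals
    have hImeas : ∀ (α β : Measure (EuclideanSpace ℝ (Fin d))), SFinite α → SFinite β →
        Measurable fun w : EuclideanSpace ℝ (Fin d) =>
          ∫⁻ z, ENNReal.ofReal |⟪w, z.1⟫ - ⟪w, z.2⟫| ∂(α.prod β) := by
      intro α β _ _
      exact Measurable.lintegral_prod_right'
        (f := fun p : EuclideanSpace ℝ (Fin d) ×
            (EuclideanSpace ℝ (Fin d) × EuclideanSpace ℝ (Fin d)) =>
          ENNReal.ofReal |⟪p.1, p.2.1⟫ - ⟪p.1, p.2.2⟫|)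
        ((ENNReal.continuous_ofReal.comp (Continuous.abs
          ((continuous_fst.inner continuous_snd.fst).sub
            (continuous_fst.inner continuous_snd.snd)))).measurable)
    have hmain : c * ((∫⁻ z, ENNReal.ofReal ‖z.1 - z.2‖ ∂(μ.prod μ))
        + (∫⁻ z, ENNReal.ofReal ‖z.1 - z.2‖ ∂(ν.prod ν)))
        ≤ c * (2 * ∫⁻ z, ENNReal.ofReal ‖z.1 - z.2‖ ∂(μ.prod ν)) := by
      rw [mul_add, key μ μ inferInstance inferInstance, key ν ν inferInstance inferInstance]
      rw [mul_left_comm c 2, key μ ν inferInstance inferInstance]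
      rw [← lintegral_add_left (f := fun w => ρ w * ∫⁻ z, ENNReal.ofReal |⟪w, z.1⟫ - ⟪w, z.2⟫| ∂(μ.prod μ)) ((ρ_cont.measurable).mul (hImeas μ μ inferInstance inferInstance))]
      rw [← lintegral_const_mul' 2 _ (by norm_num : (2:ℝ≥0∞) ≠ ⊤)]
      refine lintegral_mono fun w => ?_
      rw [← mul_add, mul_left_comm]
      refine mul_le_mul_right ?_ (ρ w)
      have h1 := bridge μ μ inferInstance inferInstance w
      have h2 := bridge ν ν inferInstance inferInstance w
      have h3 := bridge μ ν inferInstance inferInstance w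
      rw [h1, h2, h3]
      have hℓ : Measurable (fun x : EuclideanSpace ℝ (Fin d) => ⟪w, x⟫) :=
        (continuous_const.inner continuous_id).measurable
      haveI : IsProbabilityMeasure (μ.map (fun x => ⟪w, x⟫)) :=
        Measure.isProbabilityMeasure_map hℓ.aemeasurable
      haveI : IsProbabilityMeasure (ν.map (fun x => ⟪w, x⟫)) :=
        Measure.isProbabilityMeasure_map hℓ.aemeasurable
      exact oneDim _ _
    exact (ENNReal.mul_le_mul_iff_right hc0 hctop).mp hmain


end Euclid

/-- Main ENNReal-level result on a separable Hilbert space. -/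
theorem hilbert_lintegral {H : Type*} [NormedAddCommGroup H]
    [InnerProductSpace ℝ H] [CompleteSpace H] [SecondCountableTopology H]
    [MeasurableSpace H] [BorelSpace H]
    (P Q : Measure H) [IsProbabilityMeasure P] [IsProbabilityMeasure Q] :
    (∫⁻ z : H × H, ENNReal.ofReal ‖z.1 - z.2‖ ∂(P.prod P))
      + (∫⁻ z : H × H, ENNReal.ofReal ‖z.1 - z.2‖ ∂(Q.prod Q))
    ≤ 2 * ∫⁻ z : H × H, ENNReal.ofReal ‖z.1 - z.2‖ ∂(P.prod Q) := by
  classical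
  haveI : Nonempty H := ⟨0⟩
  set e : ℕ → H := TopologicalSpace.denseSeq H with he_def
  have he : DenseRange e := TopologicalSpace.denseRange_denseSeq H
  set K : ℕ → Submodule ℝ H := fun n => Submodule.span ℝ (e '' {i | i < n}) with hK
  have hKmono : Monotone K := fun a b hab =>
    Submodule.span_mono (Set.image_mono fun i (hi : i < a) => lt_of_lt_of_le hi hab)
  haveI hKfin : ∀ n, FiniteDimensional ℝ (K n) := fun n =>
    FiniteDimensional.span_of_finite ℝ ((Set.finite_Iio n).image e)
  have htop : ⊤ ≤ (⨆ n, K n).topologicalClosure := by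
    intro x _
    have hx : x ∈ closure (Set.range e) := by rw [he.closure_range]; trivial
    have hsub : Set.range e ⊆ (↑(⨆ n, K n) : Set H) := by
      rintro _ ⟨i, rfl⟩
      exact Submodule.mem_iSup_of_mem (i + 1)
        (Submodule.subset_span ⟨i, by simp, rfl⟩)
    have hcl := closure_mono hsub hx
    rw [← SetLike.mem_coe, Submodule.topologicalClosure_coe]
    exact hcl
  set π : ℕ → H → H := fun n x => ((K n).orthogonalProjectionOnto x : H) with hπ
  have hπcont : ∀ n, Continuous (π n) :=
    fun n => continuous_subtype_val.comp ((K n).orthogonalProjectionOnto).continuous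
  have hπt : ∀ x, Tendsto (fun n => π n x) atTop (𝓝 x) := fun x =>
    Submodule.starProjection_tendsto_self K hKmono x htop
  have hπle : ∀ n (z : H), ‖π n z‖ ≤ ‖z‖ := by
    intro n z
    calc ‖π n z‖ = ‖(K n).orthogonalProjectionOnto z‖ := rfl
      _ ≤ ‖(K n).orthogonalProjectionOnto‖ * ‖z‖ := ((K n).orthogonalProjectionOnto).le_opNorm z
      _ ≤ 1 * ‖z‖ :=
          mul_le_mul_of_nonneg_right ((K n).orthogonalProjectionOnto_norm_le) (norm_nonneg z)
      _ = ‖z‖ := one_mul _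
  -- per-n inequality via transfer to EuclideanSpace
  have hstep : ∀ n : ℕ,
      (∫⁻ z : H × H, ENNReal.ofReal ‖π n z.1 - π n z.2‖ ∂(P.prod P))
        + (∫⁻ z : H × H, ENNReal.ofReal ‖π n z.1 - π n z.2‖ ∂(Q.prod Q))
      ≤ 2 * ∫⁻ z : H × H, ENNReal.ofReal ‖π n z.1 - π n z.2‖ ∂(P.prod Q) := by
    intro n
    set d : ℕ := Module.finrank ℝ (K n) with hd
    set iso : (K n) ≃ₗᵢ[ℝ] EuclideanSpace ℝ (Fin d) := (stdOrthonormalBasis ℝ (K n)).repr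
      with hiso
    set f : H → EuclideanSpace ℝ (Fin d) := fun x => iso ((K n).orthogonalProjectionOnto x)
      with hf
    have hfc : Continuous f := iso.continuous.comp ((K n).orthogonalProjectionOnto).continuous
    have hfm : Measurable f := hfc.measurable
    have hnorm : ∀ x y : H, ‖f x - f y‖ = ‖π n x - π n y‖ := by
      intro x y
      rw [hf]
      simp only [← map_sub iso]
      rw [iso.norm_map]
      rfl
    have htrans : ∀ (α β : Measure H), IsProbabilityMeasure α → IsProbabilityMeasure β →
        ∫⁻ z : H × H, ENNReal.ofReal ‖π n z.1 - π n z.2‖ ∂(α.prod β)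
          = ∫⁻ s, ENNReal.ofReal ‖s.1 - s.2‖ ∂((α.map f).prod (β.map f)) := by
      intro α β hα hβ
      rw [Measure.map_prod_map _ _ hfm hfm]
      rw [lintegral_map
        (show Measurable fun s : EuclideanSpace ℝ (Fin d) × EuclideanSpace ℝ (Fin d) =>
            ENNReal.ofReal ‖s.1 - s.2‖ from
          (ENNReal.continuous_ofReal.comp
            (continuous_fst.sub continuous_snd).norm).measurable)
        (hfm.prodMap hfm)]
      refine lintegral_congr fun z => ?_
      rw [Prod.map_apply]
      rw [hnorm]
    rw [htrans P P inferInstance inferInstance, htrans Q Q inferInstance inferInstance,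
      htrans P Q inferInstance inferInstance]
    haveI : IsProbabilityMeasure (P.map f) := Measure.isProbabilityMeasure_map hfm.aemeasurable
    haveI : IsProbabilityMeasure (Q.map f) := Measure.isProbabilityMeasure_map hfm.aemeasurable
    exact finDim d (P.map f) (Q.map f)
  -- Fatou argument
  set R : Measure (H × H) := P.prod P + Q.prod Q with hR
  have hmeasn : ∀ n, Measurable fun z : H × H => ENNReal.ofReal ‖π n z.1 - π n z.2‖ := by
    intro n
    exact (ENNReal.continuous_ofReal.comp
      (((hπcont n).comp continuous_fst).sub ((hπcont n).comp continuous_snd)).norm).measurable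
  have hpt : ∀ z : H × H,
      Tendsto (fun n => ENNReal.ofReal ‖π n z.1 - π n z.2‖) atTop
        (𝓝 (ENNReal.ofReal ‖z.1 - z.2‖)) := by
    intro z
    have h1 : Tendsto (fun n => π n z.1 - π n z.2) atTop (𝓝 (z.1 - z.2)) :=
      (hπt z.1).sub (hπt z.2)
    exact (ENNReal.continuous_ofReal.tendsto _).comp ((continuous_norm.tendsto _).comp h1)
  have hliminf : ∀ z : H × H,
      ENNReal.ofReal ‖z.1 - z.2‖
        = liminf (fun n => ENNReal.ofReal ‖π n z.1 - π n z.2‖) atTop :=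
    fun z => ((hpt z).liminf_eq).symm
  have hfatou : (∫⁻ z : H × H, ENNReal.ofReal ‖z.1 - z.2‖ ∂(P.prod P))
      + (∫⁻ z : H × H, ENNReal.ofReal ‖z.1 - z.2‖ ∂(Q.prod Q))
      ≤ liminf (fun n => (∫⁻ z : H × H, ENNReal.ofReal ‖π n z.1 - π n z.2‖ ∂(P.prod P))
        + (∫⁻ z : H × H, ENNReal.ofReal ‖π n z.1 - π n z.2‖ ∂(Q.prod Q))) atTop := by
    have h1 : (∫⁻ z : H × H, ENNReal.ofReal ‖z.1 - z.2‖ ∂(R))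
        ≤ liminf (fun n => ∫⁻ z : H × H, ENNReal.ofReal ‖π n z.1 - π n z.2‖ ∂(R)) atTop := by
      calc (∫⁻ z : H × H, ENNReal.ofReal ‖z.1 - z.2‖ ∂(R))
          = ∫⁻ z : H × H, liminf (fun n => ENNReal.ofReal ‖π n z.1 - π n z.2‖) atTop ∂(R) :=
            lintegral_congr fun z => hliminf z
        _ ≤ liminf (fun n => ∫⁻ z : H × H, ENNReal.ofReal ‖π n z.1 - π n z.2‖ ∂(R)) atTop :=
            lintegral_liminf_le hmeasn
    rw [hR] at h1
    simpa only [lintegral_add_measure] using h1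
  have hC : ∀ n, (2 : ℝ≥0∞) * ∫⁻ z : H × H, ENNReal.ofReal ‖π n z.1 - π n z.2‖ ∂(P.prod Q)
      ≤ 2 * ∫⁻ z : H × H, ENNReal.ofReal ‖z.1 - z.2‖ ∂(P.prod Q) := by
    intro n
    refine mul_le_mul_right (lintegral_mono fun z => ENNReal.ofReal_le_ofReal ?_) 2
    have : π n z.1 - π n z.2 = π n (z.1 - z.2) := by
      rw [hπ]
      simp only []
      rw [← Submodule.coe_sub, ← map_sub]
    rw [this]
    exact hπle n _
  calc (∫⁻ z : H × H, ENNReal.ofReal ‖z.1 - z.2‖ ∂(P.prod P))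
      + (∫⁻ z : H × H, ENNReal.ofReal ‖z.1 - z.2‖ ∂(Q.prod Q))
      ≤ liminf (fun n => (∫⁻ z : H × H, ENNReal.ofReal ‖π n z.1 - π n z.2‖ ∂(P.prod P))
        + (∫⁻ z : H × H, ENNReal.ofReal ‖π n z.1 - π n z.2‖ ∂(Q.prod Q))) atTop := hfatou
    _ ≤ liminf (fun n =>
        2 * ∫⁻ z : H × H, ENNReal.ofReal ‖π n z.1 - π n z.2‖ ∂(P.prod Q)) atTop :=
          liminf_le_liminf (Eventually.of_forall hstep)
    _ ≤ liminf (fun _ : ℕ =>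
        2 * ∫⁻ z : H × H, ENNReal.ofReal ‖z.1 - z.2‖ ∂(P.prod Q)) atTop :=
          liminf_le_liminf (Eventually.of_forall hC)
    _ = 2 * ∫⁻ z : H × H, ENNReal.ofReal ‖z.1 - z.2‖ ∂(P.prod Q) := liminf_const _


end EnergyAux

open MeasureTheory EnergyAux

/-- Nonnegativity of the energy distance on a separable Hilbert space. -/
theorem energyDistance_nonneg {H : Type*} [NormedAddCommGroup H]
    [InnerProductSpace ℝ H] [CompleteSpace H] [SecondCountableTopology H]
    [MeasurableSpace H] [BorelSpace H]
    (P Q : Measure H) [IsProbabilityMeasure P] [IsProbabilityMeasure Q]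
    (hP : Integrable (fun x => ‖x‖) P) (hQ : Integrable (fun x => ‖x‖) Q) :
    0 ≤ (∫ p, ‖p.1 - p.2‖ ∂(P.prod Q))
      - (1/2) * (∫ p, ‖p.1 - p.2‖ ∂(P.prod P))
      - (1/2) * (∫ p, ‖p.1 - p.2‖ ∂(Q.prod Q)) := by
  have hkey := hilbert_lintegral P Q
  have hcont : Continuous fun z : H × H => ‖z.1 - z.2‖ :=
    (continuous_fst.sub continuous_snd).norm
  -- finiteness of the three lintegrals
  have hfin : ∀ (α β : Measure H), IsProbabilityMeasure α → IsProbabilityMeasure β →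
      Integrable (fun x => ‖x‖) α → Integrable (fun x => ‖x‖) β →
      (∫⁻ z : H × H, ENNReal.ofReal ‖z.1 - z.2‖ ∂(α.prod β)) ≠ ⊤ := by
    intro α β hα hβ hIα hIβ
    have hb : ∀ z : H × H, ENNReal.ofReal ‖z.1 - z.2‖
        ≤ ENNReal.ofReal ‖z.1‖ + ENNReal.ofReal ‖z.2‖ := by
      intro z
      rw [← ENNReal.ofReal_add (norm_nonneg _) (norm_nonneg _)]
      exact ENNReal.ofReal_le_ofReal (norm_sub_le _ _)
    have hm : Measurable fun x : H => ENNReal.ofReal ‖x‖ :=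
      (ENNReal.continuous_ofReal.comp continuous_norm).measurable
    have hfst : ∫⁻ z : H × H, ENNReal.ofReal ‖z.1‖ ∂(α.prod β)
        = ∫⁻ x, ENNReal.ofReal ‖x‖ ∂α := by
      calc ∫⁻ z : H × H, ENNReal.ofReal ‖z.1‖ ∂(α.prod β)
          = ∫⁻ z : H × H, ENNReal.ofReal ‖z.1‖ * (fun _ : H => (1:ℝ≥0∞)) z.2 ∂(α.prod β) := by
            simp
        _ = (∫⁻ x, ENNReal.ofReal ‖x‖ ∂α) * ∫⁻ _, 1 ∂β :=
            lintegral_prod_mul hm.aemeasurable aemeasurable_const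
        _ = ∫⁻ x, ENNReal.ofReal ‖x‖ ∂α := by simp
    have hsnd : ∫⁻ z : H × H, ENNReal.ofReal ‖z.2‖ ∂(α.prod β)
        = ∫⁻ x, ENNReal.ofReal ‖x‖ ∂β := by
      calc ∫⁻ z : H × H, ENNReal.ofReal ‖z.2‖ ∂(α.prod β)
          = ∫⁻ z : H × H, (fun _ : H => (1:ℝ≥0∞)) z.1 * ENNReal.ofReal ‖z.2‖ ∂(α.prod β) := by
            simp
        _ = (∫⁻ _, 1 ∂α) * ∫⁻ x, ENNReal.ofReal ‖x‖ ∂β :=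
            lintegral_prod_mul aemeasurable_const hm.aemeasurable
        _ = ∫⁻ x, ENNReal.ofReal ‖x‖ ∂β := by simp
    refine ne_top_of_le_ne_top ?_ (lintegral_mono hb)
    rw [lintegral_add_left (show Measurable fun z : H × H => ENNReal.ofReal ‖z.1‖ from
      hm.comp measurable_fst), hfst, hsnd]
    exact ENNReal.add_ne_top.mpr ⟨hIα.lintegral_lt_top.ne, hIβ.lintegral_lt_top.ne⟩
  have hPP := hfin P P inferInstance inferInstance hP hP
  have hQQ := hfin Q Q inferInstance inferInstance hQ hQ
  have hPQ := hfin P Q inferInstance inferInstance hP hQ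
  -- convert Bochner integrals to lintegrals
  have hconv : ∀ (α β : Measure H), IsProbabilityMeasure α → IsProbabilityMeasure β →
      ∫ z : H × H, ‖z.1 - z.2‖ ∂(α.prod β)
        = (∫⁻ z : H × H, ENNReal.ofReal ‖z.1 - z.2‖ ∂(α.prod β)).toReal := by
    intro α β _ _
    exact integral_eq_lintegral_of_nonneg_ae
      (Eventually.of_forall fun z => norm_nonneg _) hcont.aestronglyMeasurable
  rw [hconv P Q inferInstance inferInstance, hconv P P inferInstance inferInstance,
    hconv Q Q inferInstance inferInstance]
  -- real inequality
  have h2 : ((∫⁻ z : H × H, ENNReal.ofReal ‖z.1 - z.2‖ ∂(P.prod P)).toReal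
      + (∫⁻ z : H × H, ENNReal.ofReal ‖z.1 - z.2‖ ∂(Q.prod Q)).toReal)
      ≤ 2 * (∫⁻ z : H × H, ENNReal.ofReal ‖z.1 - z.2‖ ∂(P.prod Q)).toReal := by
    rw [← ENNReal.toReal_add hPP hQQ]
    have h3 : (2 * ∫⁻ z : H × H, ENNReal.ofReal ‖z.1 - z.2‖ ∂(P.prod Q)).toReal
        = 2 * (∫⁻ z : H × H, ENNReal.ofReal ‖z.1 - z.2‖ ∂(P.prod Q)).toReal := by
      rw [ENNReal.toReal_mul]
      norm_num
    rw [← h3]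
    exact ENNReal.toReal_mono (ENNReal.mul_ne_top (by norm_num) hPQ) hkey
  linarith
end

section
/- If k is a bounded, measurable, symmetric, positive semidefinite kernel on a measurable space X whose kernel mean embedding Φ(P) = ∫ k(·,ω) dP(ω) is injective on the class M of probability measures with ∫√(k(x,x)) dP < ∞, then the kernel score S_k(P,x) = (1/2)E_P[k(X,X')] − E_P[k(X,x)] + (1/2)k(x,x) is strictly proper relative to M. -/
open MeasureTheory
open scoped BigOperators

section KernelScoreAux

open Set
open scoped ENNReal


lemma aux_integrable_of_bdd {α : Type*} [MeasurableSpace α] {μ : Measure α} [IsFiniteMeasure μ]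
    {f : α → ℝ} {C : ℝ} (hf : AEStronglyMeasurable f μ) (h : ∀ x, |f x| ≤ C) :
    Integrable f μ :=
  ⟨hf, HasFiniteIntegral.of_bounded (C := C) (ae_of_all _ fun x => by
    simpa [Real.norm_eq_abs] using h x)⟩

lemma aux_map_eval_pi {Y : Type*} [MeasurableSpace Y] {n : ℕ} (ν : Measure Y)
    [IsProbabilityMeasure ν] (i : Fin n) :
    Measure.map (fun x : Fin n → Y => x i) (Measure.pi fun _ : Fin n => ν) = ν := by
  refine Measure.ext fun s hs => ?_
  rw [Measure.map_apply (measurable_pi_apply i) hs]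
  have hpre : (fun x : Fin n → Y => x i) ⁻¹' s
      = Set.pi Set.univ (fun l => if l = i then s else Set.univ) := by
    ext x
    simp only [mem_preimage, mem_pi, mem_univ, forall_true_left]
    constructor
    · intro hx l
      by_cases hl : l = i
      · subst hl; simpa using hx
      · simp [hl]
    · intro hx
      have := hx i
      simpa using this
  rw [hpre, Measure.pi_pi]
  rw [Finset.prod_eq_single i (fun b _ hb => by simp [hb]) (by simp)]
  simp

lemma aux_map_pair_pi {Y : Type*} [MeasurableSpace Y] {n : ℕ} (ν : Measure Y)
    [IsProbabilityMeasure ν] {i j : Fin n} (hij : i ≠ j) :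
    Measure.map (fun x : Fin n → Y => (x i, x j)) (Measure.pi fun _ : Fin n => ν)
      = ν.prod ν := by
  refine (Measure.prod_eq fun s t hs ht => ?_).symm
  rw [Measure.map_apply ((measurable_pi_apply i).prodMk (measurable_pi_apply j)) (hs.prod ht)]
  have hpre : (fun x : Fin n → Y => (x i, x j)) ⁻¹' (s ×ˢ t)
      = Set.pi Set.univ (fun l => if l = i then s else if l = j then t else Set.univ) := by
    ext x
    simp only [mem_preimage, mem_prod, mem_pi, mem_univ, forall_true_left]
    constructor
    · rintro ⟨h1, h2⟩ l
      by_cases hli : l = i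
      · subst hli; simpa using h1
      · by_cases hlj : l = j
        · subst hlj; simp [Ne.symm hij, h2]
        · simp [hli, hlj]
    · intro hx
      refine ⟨by simpa using hx i, ?_⟩
      have := hx j
      simpa [hij.symm] using this
  rw [hpre, Measure.pi_pi,
    ← Finset.mul_prod_erase Finset.univ _ (Finset.mem_univ i),
    ← Finset.mul_prod_erase _ _ (Finset.mem_erase.2 ⟨hij.symm, Finset.mem_univ j⟩),
    Finset.prod_eq_one (fun l hl => by
      simp only [Finset.mem_erase] at hl
      simp [hl.1, hl.2.1])]
  simp [hij.symm]

lemma aux_quad_nonneg {Y : Type*} [MeasurableSpace Y] (k : Y → Y → ℝ) (C : ℝ)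
    (hbd : ∀ x y, |k x y| ≤ C) (hmeas : Measurable (Function.uncurry k))
    (hpsd : ∀ (n : ℕ) (x : Fin n → Y), 0 ≤ ∑ i, ∑ j, k (x i) (x j))
    (ν : Measure Y) [IsProbabilityMeasure ν] :
    0 ≤ ∫ z, ∫ w, k z w ∂ν ∂ν := by
  set A := ∫ z, ∫ w, k z w ∂ν ∂ν with hA
  set B := ∫ y, k y y ∂ν with hB
  -- the uncurried kernel is integrable on the product
  have hint_prod : Integrable (fun p : Y × Y => k p.1 p.2) (ν.prod ν) :=
    aux_integrable_of_bdd (hmeas.comp (measurable_fst.prodMk measurable_snd)).aestronglyMeasurable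
      (fun p => hbd p.1 p.2)
  have hAprod : ∫ p : Y × Y, k p.1 p.2 ∂ν.prod ν = A := by
    rw [hA]; exact integral_prod _ hint_prod
  have key : ∀ n : ℕ, 0 ≤ (n : ℝ) * B + ((n : ℝ) ^ 2 - n) * A := by
    intro n
    set π : Measure (Fin n → Y) := Measure.pi fun _ : Fin n => ν with hπ
    haveI : IsProbabilityMeasure π := by rw [hπ]; infer_instance
    have hmeas_term : ∀ i j : Fin n, Measurable fun x : Fin n → Y => k (x i) (x j) :=
      fun i j => by
        have h := Measurable.comp hmeas
          (show Measurable fun x : Fin n → Y => (x i, x j) from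
            (measurable_pi_apply i).prodMk (measurable_pi_apply j))
        simpa [Function.uncurry, Function.comp_def] using h
    have hint_term : ∀ i j : Fin n, Integrable (fun x : Fin n → Y => k (x i) (x j)) π :=
      fun i j => aux_integrable_of_bdd (hmeas_term i j).aestronglyMeasurable
        (fun x => hbd _ _)
    have h0 : 0 ≤ ∫ x, (∑ i, ∑ j, k (x i) (x j)) ∂π :=
      integral_nonneg fun x => hpsd n x
    have hsum : ∫ x, (∑ i, ∑ j, k (x i) (x j)) ∂π
        = ∑ i, ∑ j, ∫ x, k (x i) (x j) ∂π := by
      rw [integral_finset_sum _ (fun i _ => integrable_finset_sum _ (fun j _ => hint_term i j))]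
      exact Finset.sum_congr rfl fun i _ => integral_finset_sum _ (fun j _ => hint_term i j)
    have hterm : ∀ i j : Fin n, ∫ x, k (x i) (x j) ∂π = if i = j then B else A := by
      intro i j
      by_cases hij : i = j
      · subst hij
        rw [if_pos rfl, hB]
        have hd : Measurable fun y : Y => k y y :=
          hmeas.comp (measurable_id.prodMk measurable_id)
        rw [← aux_map_eval_pi ν i,
          integral_map (measurable_pi_apply i).aemeasurable]
        rw [aux_map_eval_pi ν i]
        exact hd.aestronglyMeasurable
      · rw [if_neg hij, ← hAprod, ← aux_map_pair_pi ν hij,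
          integral_map ((measurable_pi_apply i).prodMk (measurable_pi_apply j)).aemeasurable]
        rw [aux_map_pair_pi ν hij]
        exact (hmeas.comp (measurable_fst.prodMk measurable_snd)).aestronglyMeasurable
      -- ??
    rw [hsum] at h0
    have hcalc : ∑ i : Fin n, ∑ j : Fin n, ∫ x, k (x i) (x j) ∂π
        = (n : ℝ) * B + ((n : ℝ) ^ 2 - n) * A := by
      have : ∀ i j : Fin n, ∫ x, k (x i) (x j) ∂π = A + if i = j then B - A else 0 := by
        intro i j; rw [hterm i j]; by_cases h : i = j <;> simp [h]
      simp_rw [this]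
      rw [Finset.sum_congr rfl fun i _ => Finset.sum_add_distrib]
      simp [Finset.sum_ite_eq, Finset.sum_add_distrib, Finset.card_univ]
      ring
    rw [hcalc] at h0
    exact h0
  by_contra h
  push_neg at h
  have hA0 : 0 < -A := by linarith
  obtain ⟨n, hn⟩ := exists_nat_gt ((B + 1) / (-A))
  have hn' : B + 1 < n * (-A) := (div_lt_iff₀ hA0).mp hn
  have := key (n + 1)
  push_cast at this
  nlinarith

lemma aux_comb_nonneg {X : Type*} [MeasurableSpace X] (k : X → X → ℝ) (C : ℝ)
    (hbd : ∀ x y, |k x y| ≤ C) (hmeas : Measurable (Function.uncurry k))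
    (hpsd : ∀ (n : ℕ) (x : Fin n → X) (c : Fin n → ℝ),
      0 ≤ ∑ i, ∑ j, c i * c j * k (x i) (x j))
    (a : Fin 3 → ℝ) (m : Fin 3 → Measure X) (hm : ∀ p, IsProbabilityMeasure (m p)) :
    0 ≤ ∑ p, ∑ q, a p * a q * (∫ z, ∫ w, k z w ∂(m q) ∂(m p)) := by
  haveI := hm
  -- bound on the coefficients
  set M : ℝ := |a 0| + |a 1| + |a 2| with hM
  have hMa : ∀ p : Fin 3, |a p| ≤ M := by
    intro p
    have h0 := abs_nonneg (a 0)
    have h1 := abs_nonneg (a 1)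
    have h2 := abs_nonneg (a 2)
    have hp : p = 0 ∨ p = 1 ∨ p = 2 := by fin_cases p <;> simp
    rcases hp with h | h | h <;> subst h <;> simp only [hM] <;> linarith
  -- the big kernel
  set k' : X × Fin 3 → X × Fin 3 → ℝ := fun z w => a z.2 * a w.2 * k z.1 w.1 with hk'
  have hbd' : ∀ z w, |k' z w| ≤ M * M * (|C| + 1) := by
    intro z w
    rw [hk']
    have h1 := hMa z.2
    have h2 := hMa w.2
    have h3 := hbd z.1 w.1
    have h4 : |k z.1 w.1| ≤ |C| + 1 := le_trans h3 (by
      have := le_abs_self C; linarith)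
    have h5 : (0:ℝ) ≤ |a z.2| := abs_nonneg _
    have h6 : (0:ℝ) ≤ |a w.2| := abs_nonneg _
    have h7 : (0:ℝ) ≤ |k z.1 w.1| := abs_nonneg _
    have h8 : (0:ℝ) ≤ M := le_trans h5 h1
    calc |a z.2 * a w.2 * k z.1 w.1| = |a z.2| * |a w.2| * |k z.1 w.1| := by
          rw [abs_mul, abs_mul]
      _ ≤ M * M * (|C| + 1) :=
          mul_le_mul (mul_le_mul h1 h2 h6 h8) h4 h7 (by positivity)
  have hmeas' : Measurable (Function.uncurry k') := by
    have h1 : Measurable fun zw : (X × Fin 3) × (X × Fin 3) => k zw.1.1 zw.2.1 := by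
      have := Measurable.comp hmeas
        (show Measurable fun zw : (X × Fin 3) × (X × Fin 3) => (zw.1.1, zw.2.1) from
          (measurable_fst.fst).prodMk (measurable_snd.fst))
      simpa [Function.uncurry, Function.comp_def] using this
    exact ((measurable_from_top.comp (measurable_fst.snd)).mul
      (measurable_from_top.comp (measurable_snd.snd))).mul h1
  have hpsd' : ∀ (n : ℕ) (z : Fin n → X × Fin 3), 0 ≤ ∑ i, ∑ j, k' (z i) (z j) := by
    intro n z
    exact hpsd n (fun i => (z i).1) (fun i => a (z i).2)
  -- the mixture measure
  set ν : Measure (X × Fin 3) :=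
    (3 : ℝ≥0∞)⁻¹ • (∑ p : Fin 3, Measure.map (fun x => (x, p)) (m p)) with hν
  have hmap_meas : ∀ p : Fin 3, Measurable fun x : X => (x, p) :=
    fun p => measurable_id.prodMk measurable_const
  haveI hνprob : IsProbabilityMeasure ν := by
    constructor
    rw [hν]
    simp only [Measure.smul_apply, Measure.finset_sum_apply, smul_eq_mul]
    have : ∀ p : Fin 3, (Measure.map (fun x : X => (x, p)) (m p)) univ = 1 := by
      intro p
      rw [Measure.map_apply (hmap_meas p) MeasurableSet.univ]
      simp
    simp only [this]
    simp
    exact ENNReal.inv_mul_cancel (by norm_num) (by norm_num)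
  -- measurability / integrability helpers
  haveI hmapprob : ∀ p : Fin 3, IsProbabilityMeasure (Measure.map (fun x : X => (x, p)) (m p)) := by
    intro p
    constructor
    rw [Measure.map_apply (hmap_meas p) MeasurableSet.univ]
    simp
  have hmeas_k'z : ∀ z : X × Fin 3, Measurable fun w => k' z w := by
    intro z
    have := Measurable.comp hmeas'
      (show Measurable fun w : X × Fin 3 => (z, w) from measurable_const.prodMk measurable_id)
    simpa [Function.uncurry, Function.comp_def] using this
  set Φ : Fin 3 → X → ℝ := fun q x => ∫ w, k x w ∂(m q) with hΦ
  have hΦsm : ∀ q, StronglyMeasurable (Φ q) := by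
    intro q
    exact (hmeas.stronglyMeasurable).integral_prod_right'
  have hΦbd : ∀ q x, |Φ q x| ≤ |C| + 1 := by
    intro q x
    have h1 : ∀ᵐ w ∂(m q), ‖k x w‖ ≤ |C| + 1 := ae_of_all _ fun w => by
      rw [Real.norm_eq_abs]
      have := hbd x w
      have := le_abs_self C
      linarith
    have := norm_integral_le_of_norm_le_const h1
    simpa [Real.norm_eq_abs] using this
  have hΦint : ∀ q p, Integrable (Φ q) (m p) := fun q p =>
    aux_integrable_of_bdd (hΦsm q).aestronglyMeasurable (hΦbd q)
  set c : ℝ := ((3 : ℝ≥0∞)⁻¹).toReal with hc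
  -- inner integral computation
  have hinner : ∀ z : X × Fin 3, ∫ w, k' z w ∂ν
      = c * ∑ q, a z.2 * a q * Φ q z.1 := by
    intro z
    rw [hν, integral_smul_measure, smul_eq_mul]
    congr 1
    rw [integral_finset_sum_measure (fun q _ => by
      refine (integrable_map_measure (hmeas_k'z z).aestronglyMeasurable
        (hmap_meas q).aemeasurable).mpr ?_
      exact aux_integrable_of_bdd
        ((hmeas_k'z z).comp (hmap_meas q)).aestronglyMeasurable
        (fun x => hbd' z (x, q)))]
    refine Finset.sum_congr rfl fun q _ => ?_
    rw [integral_map (hmap_meas q).aemeasurable (hmeas_k'z z).aestronglyMeasurable]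
    simp only [hk']
    rw [integral_const_mul]
  -- the function z ↦ inner integral
  have hFmeas : Measurable fun z : X × Fin 3 => ∑ q, a z.2 * a q * Φ q z.1 := by
    refine Finset.measurable_sum _ fun q _ => ?_
    exact ((measurable_from_top.comp measurable_snd).mul measurable_const).mul
      ((hΦsm q).measurable.comp measurable_fst)
  have hFbd : ∀ z : X × Fin 3, |∑ q, a z.2 * a q * Φ q z.1| ≤ 3 * (M * M * (|C| + 1)) := by
    intro z
    calc |∑ q, a z.2 * a q * Φ q z.1| ≤ ∑ q, |a z.2 * a q * Φ q z.1| :=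
          Finset.abs_sum_le_sum_abs _ _
      _ ≤ ∑ _q : Fin 3, M * M * (|C| + 1) := by
          refine Finset.sum_le_sum fun q _ => ?_
          rw [abs_mul, abs_mul]
          have h8 : (0:ℝ) ≤ M := le_trans (abs_nonneg _) (hMa 0)
          exact mul_le_mul (mul_le_mul (hMa z.2) (hMa q) (abs_nonneg _) h8)
            (hΦbd q z.1) (abs_nonneg _) (by positivity)
      _ = 3 * (M * M * (|C| + 1)) := by
          rw [Finset.sum_const, Finset.card_univ]
          simp [nsmul_eq_mul]
  -- outer integral computation
  have houter : ∫ z, ∫ w, k' z w ∂ν ∂ν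
      = c * (c * ∑ p, ∑ q, a p * a q * ∫ x, Φ q x ∂(m p)) := by
    rw [integral_congr_ae (ae_of_all _ hinner), integral_const_mul]
    congr 1
    rw [hν, integral_smul_measure, smul_eq_mul]
    congr 1
    rw [integral_finset_sum_measure (fun p _ => by
      refine (integrable_map_measure hFmeas.aestronglyMeasurable
        (hmap_meas p).aemeasurable).mpr ?_
      exact aux_integrable_of_bdd (hFmeas.comp (hmap_meas p)).aestronglyMeasurable
        (fun x => hFbd (x, p)))]
    refine Finset.sum_congr rfl fun p _ => ?_
    rw [integral_map (hmap_meas p).aemeasurable hFmeas.aestronglyMeasurable]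
    simp only [show ∀ x : X, ((x, p)).2 = p from fun _ => rfl,
      show ∀ x : X, ((x, p)).1 = x from fun _ => rfl]
    rw [integral_finset_sum _ (fun q _ => (hΦint q p).const_mul (a p * a q))]
    refine Finset.sum_congr rfl fun q _ => ?_
    rw [integral_const_mul]
  have hpos := aux_quad_nonneg k' (M * M * (|C| + 1)) hbd' hmeas' hpsd' ν
  rw [houter] at hpos
  have hcval : c = 3⁻¹ := by
    rw [hc, ENNReal.toReal_inv]
    norm_num
  rw [hcval] at hpos
  have hS := hpos
  nlinarith [hS]


end KernelScoreAux

/-- The kernel score of a bounded, measurable, symmetric, positive semidefinite kernel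
with injective kernel mean embedding is strictly proper. -/
theorem kernelScore_strictly_proper {X : Type*} [MeasurableSpace X]
    (k : X → X → ℝ) (C : ℝ)
    (hbd : ∀ x y, |k x y| ≤ C)
    (hmeas : Measurable (Function.uncurry k))
    (hsymm : ∀ x y, k x y = k y x)
    (hpsd : ∀ (n : ℕ) (x : Fin n → X) (c : Fin n → ℝ),
      0 ≤ ∑ i, ∑ j, c i * c j * k (x i) (x j))
    (hinj : ∀ P Q : Measure X, IsProbabilityMeasure P → IsProbabilityMeasure Q →
      Integrable (fun x => Real.sqrt (k x x)) P →
      Integrable (fun x => Real.sqrt (k x x)) Q →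
      (fun y => ∫ ω, k y ω ∂P) = (fun y => ∫ ω, k y ω ∂Q) → P = Q)
    (P Q : Measure X) [IsProbabilityMeasure P] [IsProbabilityMeasure Q]
    (hPk : Integrable (fun x => Real.sqrt (k x x)) P)
    (hQk : Integrable (fun x => Real.sqrt (k x x)) Q) :
    ((∫ x, ((1/2) * (∫ p, k p.1 p.2 ∂(P.prod P)) - (∫ X, k X x ∂P)
        + (1/2) * k x x) ∂P)
      ≤ ∫ x, ((1/2) * (∫ p, k p.1 p.2 ∂(Q.prod Q)) - (∫ X, k X x ∂Q)
        + (1/2) * k x x) ∂P)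
    ∧ ((∫ x, ((1/2) * (∫ p, k p.1 p.2 ∂(P.prod P)) - (∫ X, k X x ∂P)
        + (1/2) * k x x) ∂P)
      = (∫ x, ((1/2) * (∫ p, k p.1 p.2 ∂(Q.prod Q)) - (∫ X, k X x ∂Q)
        + (1/2) * k x x) ∂P)
      ↔ P = Q) := by
  classical
  -- abbreviations
  set ΦP : X → ℝ := fun x => ∫ w, k x w ∂P with hΦP
  set ΦQ : X → ℝ := fun x => ∫ w, k x w ∂Q with hΦQ
  -- measurability of basic pieces
  have hmeas2 : Measurable fun p : X × X => k p.1 p.2 := by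
    have := Measurable.comp hmeas
      (show Measurable fun p : X × X => (p.1, p.2) from measurable_fst.prodMk measurable_snd)
    simpa [Function.uncurry, Function.comp_def] using this
  have hdiag : Measurable fun x : X => k x x := by
    have := Measurable.comp hmeas
      (show Measurable fun x : X => (x, x) from measurable_id.prodMk measurable_id)
    simpa [Function.uncurry, Function.comp_def] using this
  have hkz : ∀ z : X, Measurable fun w => k z w := by
    intro z
    have := Measurable.comp hmeas
      (show Measurable fun w : X => (z, w) from measurable_const.prodMk measurable_id)
    simpa [Function.uncurry, Function.comp_def] using this
  have hky : ∀ y : X, Measurable fun z => k z y := by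
    intro y
    have := Measurable.comp hmeas
      (show Measurable fun z : X => (z, y) from measurable_id.prodMk measurable_const)
    simpa [Function.uncurry, Function.comp_def] using this
  have hΦPsm : StronglyMeasurable ΦP := hmeas.stronglyMeasurable.integral_prod_right'
  have hΦQsm : StronglyMeasurable ΦQ := hmeas.stronglyMeasurable.integral_prod_right'
  have habs : ∀ x y : X, |k x y| ≤ |C| + 1 := fun x y =>
    le_trans (hbd x y) (by have := le_abs_self C; linarith)
  have hΦbd : ∀ (μ : Measure X), IsProbabilityMeasure μ → ∀ x, |∫ w, k x w ∂μ| ≤ |C| + 1 := by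
    intro μ hμ x
    have h1 : ∀ᵐ w ∂μ, ‖k x w‖ ≤ |C| + 1 := ae_of_all _ fun w => by
      rw [Real.norm_eq_abs]; exact habs x w
    have := norm_integral_le_of_norm_le_const h1
    simpa [Real.norm_eq_abs] using this
  have hΦPint : ∀ (μ : Measure X), IsProbabilityMeasure μ → Integrable ΦP μ := fun μ hμ =>
    aux_integrable_of_bdd hΦPsm.aestronglyMeasurable (hΦbd P ‹_›)
  have hΦQint : ∀ (μ : Measure X), IsProbabilityMeasure μ → Integrable ΦQ μ := fun μ hμ =>
    aux_integrable_of_bdd hΦQsm.aestronglyMeasurable (hΦbd Q ‹_›)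
  have hdiagint : ∀ (μ : Measure X), IsProbabilityMeasure μ →
      Integrable (fun x => (1/2 : ℝ) * k x x) μ := by
    intro μ hμ
    exact ((aux_integrable_of_bdd (hdiag.aestronglyMeasurable) (fun x => habs x x)).const_mul _)
  -- the double integrals
  have hprod : ∀ (μ : Measure X), IsProbabilityMeasure μ →
      (∫ p, k p.1 p.2 ∂(μ.prod μ)) = ∫ z, ∫ w, k z w ∂μ ∂μ := by
    intro μ hμ
    exact integral_prod _ (aux_integrable_of_bdd hmeas2.aestronglyMeasurable fun p => habs _ _)
  set DPP : ℝ := ∫ z, ∫ w, k z w ∂P ∂P with hDPP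
  set DQQ : ℝ := ∫ z, ∫ w, k z w ∂Q ∂Q with hDQQ
  set DPQ : ℝ := ∫ z, ∫ w, k z w ∂Q ∂P with hDPQ
  set DQP : ℝ := ∫ z, ∫ w, k z w ∂P ∂Q with hDQP
  set dP : ℝ := ∫ x, k x x ∂P with hdP
  -- Fubini swap: DPQ = DQP
  have hswap : DPQ = DQP := by
    rw [hDPQ, hDQP]
    rw [integral_integral_swap (f := fun z w => k z w)
      (aux_integrable_of_bdd hmeas2.aestronglyMeasurable fun p => habs _ _)]
    congr 1
    funext w
    exact integral_congr_ae (ae_of_all _ fun z => hsymm z w)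
  -- the inner integral in the score, rewritten by symmetry
  have hsym_int : ∀ (μ : Measure X) (x : X), (∫ X, k X x ∂μ) = ∫ w, k x w ∂μ := by
    intro μ x
    exact integral_congr_ae (ae_of_all _ fun w => hsymm w x)
  -- expected score of P under P
  have hLP : (∫ x, ((1/2) * (∫ p, k p.1 p.2 ∂(P.prod P)) - (∫ X, k X x ∂P)
      + (1/2) * k x x) ∂P) = 1/2 * DPP - DPP + 1/2 * dP := by
    have h1 : ∀ x : X, ((1/2) * (∫ p, k p.1 p.2 ∂(P.prod P)) - (∫ X, k X x ∂P)
        + (1/2) * k x x) = ((1/2 * DPP : ℝ) - ΦP x) + (1/2) * k x x := by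
      intro x
      rw [hprod P ‹_›, hsym_int P x, ← hDPP, hΦP]
    have hsub : Integrable (fun x => (1/2 * DPP : ℝ) - ΦP x) P :=
      (integrable_const _).sub (hΦPint P ‹_›)
    rw [integral_congr_ae (ae_of_all _ h1), integral_add hsub (hdiagint P ‹_›),
      integral_sub (integrable_const _) (hΦPint P ‹_›), integral_const,
      integral_const_mul]
    simp [hdP, hDPP, hΦP]
  -- expected score of Q under P
  have hLQ : (∫ x, ((1/2) * (∫ p, k p.1 p.2 ∂(Q.prod Q)) - (∫ X, k X x ∂Q)
      + (1/2) * k x x) ∂P) = 1/2 * DQQ - DPQ + 1/2 * dP := by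
    have h1 : ∀ x : X, ((1/2) * (∫ p, k p.1 p.2 ∂(Q.prod Q)) - (∫ X, k X x ∂Q)
        + (1/2) * k x x) = ((1/2 * DQQ : ℝ) - ΦQ x) + (1/2) * k x x := by
      intro x
      rw [hprod Q ‹_›, hsym_int Q x, ← hDQQ, hΦQ]
    have hsub : Integrable (fun x => (1/2 * DQQ : ℝ) - ΦQ x) P :=
      (integrable_const _).sub (hΦQint P ‹_›)
    rw [integral_congr_ae (ae_of_all _ h1), integral_add hsub (hdiagint P ‹_›),
      integral_sub (integrable_const _) (hΦQint P ‹_›), integral_const,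
      integral_const_mul]
    simp [hdP, hDPQ, hΦQ]
  -- nonnegativity of the MMD
  have hMMD : 0 ≤ DPP - 2 * DPQ + DQQ := by
    have hcomb := aux_comb_nonneg k C hbd hmeas hpsd ![0, 1, -1] ![P, P, Q] (by
      intro p; fin_cases p <;> simp <;> infer_instance)
    simp only [Fin.sum_univ_three, Matrix.cons_val_zero, Matrix.cons_val_one,
      Matrix.head_cons, Matrix.cons_val_two, Matrix.tail_cons] at hcomb
    rw [← hDPP, ← hDQQ, ← hDPQ, ← hDQP] at hcomb
    rw [hswap] at hcomb
    linarith
  constructor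
  · rw [hLP, hLQ]; linarith
  constructor
  · -- equality implies P = Q
    intro heq
    rw [hLP, hLQ] at heq
    have hA0 : DPP - 2 * DPQ + DQQ = 0 := by linarith
    -- pointwise equality of mean embeddings
    have hpt : ∀ y : X, ΦP y = ΦQ y := by
      intro y
      have hK : 0 ≤ k y y := by
        have := hpsd 1 (fun _ => y) (fun _ => 1)
        simpa using this
      have hquad : ∀ t : ℝ, 0 ≤ t^2 * k y y + 2 * t * (ΦP y - ΦQ y) := by
        intro t
        have hcomb := aux_comb_nonneg k C hbd hmeas hpsd ![t, 1, -1]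
          ![Measure.dirac y, P, Q] (by
            intro p; fin_cases p <;> simp <;> infer_instance)
        simp only [Fin.sum_univ_three, Matrix.cons_val_zero, Matrix.cons_val_one,
          Matrix.head_cons, Matrix.cons_val_two, Matrix.tail_cons] at hcomb
        -- evaluate the dirac integrals
        have hdir_in : ∀ (z : X), (∫ w, k z w ∂(Measure.dirac y)) = k z y := by
          intro z
          exact integral_dirac' _ _ (hkz z).stronglyMeasurable
        simp only [hdir_in] at hcomb
        have e1 : (∫ z, k z y ∂(Measure.dirac y)) = k y y :=
          integral_dirac' _ _ (hky y).stronglyMeasurable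
        have e2 : (∫ z, (∫ w, k z w ∂P) ∂(Measure.dirac y)) = ΦP y :=
          integral_dirac' _ _ hΦPsm
        have e3 : (∫ z, (∫ w, k z w ∂Q) ∂(Measure.dirac y)) = ΦQ y :=
          integral_dirac' _ _ hΦQsm
        have e4 : (∫ z, k z y ∂P) = ΦP y := by
          rw [hΦP]
          exact integral_congr_ae (ae_of_all _ fun z => hsymm z y)
        have e5 : (∫ z, k z y ∂Q) = ΦQ y := by
          rw [hΦQ]
          exact integral_congr_ae (ae_of_all _ fun z => hsymm z y)
        rw [e1, e2, e3, e4, e5, ← hDPP, ← hDQQ, ← hDPQ, ← hDQP, hswap] at hcomb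
        nlinarith [hcomb, hA0]
      set g : ℝ := ΦP y - ΦQ y with hg
      have hgz : g = 0 := by
        have h := hquad (-g / (k y y + 1))
        have hK1 : (0:ℝ) < k y y + 1 := by linarith
        have hg2 : g^2 ≤ 0 := by
          have h2 := mul_le_mul_of_nonneg_left h (le_of_lt (mul_pos hK1 hK1))
          rw [mul_zero] at h2
          have hexp : (k y y + 1) * (k y y + 1) * ((-g / (k y y + 1))^2 * k y y
              + 2 * (-g / (k y y + 1)) * g)
              = g^2 * k y y - 2 * g^2 * (k y y + 1) := by
            field_simp
            ring
          rw [hexp] at h2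
          nlinarith
        have := sq_nonneg g
        have : g^2 = 0 := le_antisymm hg2 (sq_nonneg g)
        exact pow_eq_zero_iff (by norm_num) |>.mp this
      linarith
    have : (fun y => ∫ ω, k y ω ∂P) = fun y => ∫ ω, k y ω ∂Q := funext hpt
    exact hinj P Q ‹_› ‹_› hPk hQk this
  · -- P = Q implies equality
    intro h
    subst h
    rfl
end
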